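/- In the setting of a directed index set ι with filter l, scale r_λ → +∞, and mutually absolutely continuous probability measures P_λ, P̂_λ with entropy production σ_λ := log(dP_λ/dP̂_λ): assume that I : ℝ → [0,+∞] is convex and lower semicontinuous, that the large-deviation lower bound liminf_λ r_λ^{−1} log P_λ(r_λ^{−1}σ_λ ∈ U) ≥ −inf_{s∈U} I(s) holds for every open U ⊆ ℝ, and that the entropic pressure e(α) := sup_{s∈ℝ}(αs − I(−s)) satisfies e(α) = lim_λ r_λ^{−1} log ∫ e^{−ασ_λ} dP_λ for every α ∈ [0,1]. Then the Chernoff exponents coincide: lim_λ r_λ^{−1} log(1 − ‖P_λ − P̂_λ‖_var) exists and equals −I(0) = inf_{α∈[0,1]} e(α). -/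

import Mathlib

open MeasureTheory Filter
open scoped ENNReal

/-- The entropy production observable of a pair of measures:
`σ(x) = log (dP/dQ)(x)`. -/
noncomputable def entropyProduction {Ω : Type*} [MeasurableSpace Ω]
    (P Q : Measure Ω) (x : Ω) : ℝ :=
  Real.log ((P.rnDeriv Q x).toReal)

/-- The total variation distance `‖P − Q‖_var = sup_Γ (P(Γ) − Q(Γ))`,
the supremum running over measurable sets. -/
noncomputable def tvDist {Ω : Type*} [MeasurableSpace Ω] (P Q : Measure Ω) : ℝ≥0∞ :=
  ⨆ (Γ : Set Ω) (_ : MeasurableSet Γ), (P Γ - Q Γ)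

lemma ereal_coe_ennreal_fin {x : ℝ≥0∞} (hx : x ≠ ⊤) :
    (x : EReal) = ((x.toReal : ℝ) : EReal) := by
  have h1 : (x : EReal) ≠ ⊤ := by simp [hx]
  have h2 : (x : EReal) ≠ ⊥ := by
    intro h
    exact absurd (h ▸ EReal.coe_ennreal_nonneg x) (by simp)
  rw [← EReal.coe_toReal h1 h2, EReal.toReal_coe_ennreal]


lemma ereal_lt_fin {x : ℝ≥0∞} {δ : ℝ} (h : (x : EReal) < (δ : EReal)) :
    x ≠ ⊤ ∧ x.toReal < δ := by
  have hx : x ≠ ⊤ := by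
    intro hh
    rw [hh, EReal.coe_ennreal_top] at h
    exact absurd h (by simp)
  refine ⟨hx, ?_⟩
  rw [ereal_coe_ennreal_fin hx] at h
  exact_mod_cast h

/-- Separation lemma (Fenchel-Moreau at the point `0`). -/

lemma ereal_mul_add_distrib {k x : ℝ} (hk : 0 < k) (z : EReal) (hz : z ≠ ⊤) :
    (k : EReal) * ((x : EReal) + z) = ((k * x : ℝ) : EReal) + (k : EReal) * z := by
  induction z with
  | bot =>
      have h1 : ((x : EReal) + ⊥) = ⊥ := EReal.add_bot _
      have h2 : (k : EReal) * ⊥ = ⊥ := EReal.mul_bot_of_pos (by exact_mod_cast hk)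
      rw [h1, h2, EReal.add_bot]
  | coe z =>
      rw [← EReal.coe_add, ← EReal.coe_mul, ← EReal.coe_mul, ← EReal.coe_add, mul_add]
  | top => exact absurd rfl hz

lemma chernoff_sep (I : ℝ → ℝ≥0∞)
    (hIconv : ∀ x y p q : ℝ, 0 ≤ p → 0 ≤ q → p + q = 1 →
      I (p * x + q * y) ≤ ENNReal.ofReal p * I x + ENNReal.ofReal q * I y)
    (hIlsc : LowerSemicontinuous I)
    (hg : ∀ t : ℝ, 0 ≤ (I t : EReal) + (t : EReal))
    (hi : ∀ δ : ℝ, 0 < δ → ∃ t : ℝ, (I t : EReal) < (δ : EReal))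
    (hii : ∀ δ : ℝ, 0 < δ → ∃ t : ℝ, (I t : EReal) + (t : EReal) < (δ : EReal))
    (c : ℝ) (hc0 : 0 < c) (hc : (c : EReal) < (I 0 : EReal)) :
    ∃ α ∈ Set.Icc (0:ℝ) 1, ∀ t : ℝ, (c : EReal) ≤ (I t : EReal) + ((α * t : ℝ) : EReal) := by
  -- real form of the auxiliary hypotheses
  have hgreal : ∀ t : ℝ, I t ≠ ⊤ → 0 ≤ (I t).toReal + t := by
    intro t ht
    have := hg t
    rw [ereal_coe_ennreal_fin ht, ← EReal.coe_add] at this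
    exact_mod_cast this
  have hiireal : ∀ δ : ℝ, 0 < δ → ∃ t : ℝ, I t ≠ ⊤ ∧ (I t).toReal + t < δ := by
    intro δ hδ
    obtain ⟨t, ht⟩ := hii δ hδ
    have htfin : I t ≠ ⊤ := by
      intro hh
      rw [hh, EReal.coe_ennreal_top, EReal.top_add_coe] at ht
      exact absurd ht (by simp)
    refine ⟨t, htfin, ?_⟩
    rw [ereal_coe_ennreal_fin htfin, ← EReal.coe_add] at ht
    exact_mod_cast ht
  -- the epigraph
  set S : Set (ℝ × ℝ) := {p | 0 ≤ p.2 ∧ I p.1 ≤ ENNReal.ofReal p.2} with hS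
  have hSclosed : IsClosed S := by
    have h1 : IsClosed {p : ℝ × ℝ≥0∞ | I p.1 ≤ p.2} := hIlsc.isClosed_epigraph
    have h2 : Continuous fun p : ℝ × ℝ => ((p.1, ENNReal.ofReal p.2) : ℝ × ℝ≥0∞) :=
      continuous_fst.prodMk (ENNReal.continuous_ofReal.comp continuous_snd)
    have hSeq : S = {p : ℝ × ℝ | 0 ≤ p.2} ∩
        (fun p : ℝ × ℝ => ((p.1, ENNReal.ofReal p.2) : ℝ × ℝ≥0∞)) ⁻¹'
          {p : ℝ × ℝ≥0∞ | I p.1 ≤ p.2} := by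
      ext p
      simp [hS, Set.mem_setOf_eq, and_comm]
    rw [hSeq]
    exact (isClosed_le continuous_const continuous_snd).inter (h1.preimage h2)
  have hSconvex : Convex ℝ S := by
    rintro p ⟨hp2, hpI⟩ q ⟨hq2, hqI⟩ a b ha hb hab
    have hcoord : (a • p + b • q : ℝ × ℝ) = (a * p.1 + b * q.1, a * p.2 + b * q.2) := by
      simp [Prod.ext_iff, smul_eq_mul]
    rw [Set.mem_setOf_eq, hcoord]
    constructor
    · have := mul_nonneg ha hp2
      have := mul_nonneg hb hq2
      dsimp only
      linarith
    · dsimp only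
      calc I (a * p.1 + b * q.1) ≤ ENNReal.ofReal a * I p.1 + ENNReal.ofReal b * I q.1 :=
            hIconv p.1 q.1 a b ha hb hab
        _ ≤ ENNReal.ofReal a * ENNReal.ofReal p.2 + ENNReal.ofReal b * ENNReal.ofReal q.2 := by
            gcongr
        _ = ENNReal.ofReal (a * p.2) + ENNReal.ofReal (b * q.2) := by
            rw [← ENNReal.ofReal_mul ha, ← ENNReal.ofReal_mul hb]
        _ = ENNReal.ofReal (a * p.2 + b * q.2) := by
            rw [ENNReal.ofReal_add (mul_nonneg ha hp2) (mul_nonneg hb hq2)]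
  have hx : ((0:ℝ), c) ∉ S := by
    rintro ⟨-, h2⟩
    have h3 : (ENNReal.ofReal c : EReal) = (c : EReal) := by
      rw [EReal.coe_ennreal_ofReal]
      exact_mod_cast max_eq_left hc0.le
    have h4 : (I 0 : EReal) ≤ (c : EReal) := by
      rw [← h3]
      exact EReal.coe_ennreal_le_coe_ennreal_iff.2 h2
    exact absurd hc (not_lt.2 h4)
  obtain ⟨f, u, hfu, hfS⟩ := geometric_hahn_banach_point_closed hSconvex hSclosed hx
  set a := f ((1:ℝ), (0:ℝ)) with ha_def
  set b := f ((0:ℝ), (1:ℝ)) with hb_def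
  have hf : ∀ p : ℝ × ℝ, f p = a * p.1 + b * p.2 := by
    intro p
    have hp : p = p.1 • ((1:ℝ), (0:ℝ)) + p.2 • ((0:ℝ), (1:ℝ)) := by
      ext <;> simp
    conv_lhs => rw [hp]
    rw [map_add, f.map_smul, f.map_smul, smul_eq_mul, smul_eq_mul, ← ha_def, ← hb_def]
    ring
  have hmem : ∀ t : ℝ, I t ≠ ⊤ → ((t, (I t).toReal) : ℝ × ℝ) ∈ S :=
    fun t ht => ⟨ENNReal.toReal_nonneg, by rw [ENNReal.ofReal_toReal ht]⟩
  have hbc : b * c < u := by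
    have := hfu
    rw [hf] at this
    simpa using this
  have hb0 : 0 ≤ b := by
    by_contra hbneg
    push_neg at hbneg
    obtain ⟨t₁, ht₁'⟩ := hi 1 one_pos
    obtain ⟨ht₁fin, -⟩ := ereal_lt_fin ht₁'
    set y := max (I t₁).toReal ((u - a * t₁) / b) with hy
    have hymem : ((t₁, y) : ℝ × ℝ) ∈ S := by
      refine ⟨le_trans ENNReal.toReal_nonneg (le_max_left _ _), ?_⟩
      calc I t₁ = ENNReal.ofReal (I t₁).toReal := (ENNReal.ofReal_toReal ht₁fin).symm
        _ ≤ ENNReal.ofReal y := ENNReal.ofReal_le_ofReal (le_max_left _ _)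
    have h1 := hfS _ hymem
    rw [hf] at h1
    have h2 : b * y ≤ u - a * t₁ := by
      have hyge : (u - a * t₁) / b ≤ y := le_max_right _ _
      have := mul_le_mul_of_nonpos_left hyge hbneg.le
      calc b * y ≤ b * ((u - a * t₁) / b) := this
        _ = u - a * t₁ := by rw [mul_comm, div_mul_cancel₀ _ (ne_of_lt hbneg)]
    simp only at h1
    linarith
  rcases eq_or_lt_of_le hb0 with hb0' | hbpos
  · -- degenerate case b = 0 : contradiction
    exfalso
    have hu0 : 0 < u := by
      rw [← hb0'] at hbc
      simpa using hbc
    have hdom : ∀ t : ℝ, I t ≠ ⊤ → u < a * t := by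
      intro t ht
      have := hfS _ (hmem t ht)
      rw [hf, ← hb0'] at this
      simpa using this
    rcases lt_trichotomy a 0 with haneg | ha0 | hapos
    · -- a < 0
      have hδpos : 0 < -u / a := by
        apply div_pos_of_neg_of_neg _ haneg
        linarith
      obtain ⟨t, ht⟩ := hi (-u / a) hδpos
      obtain ⟨htfin, htlt⟩ := ereal_lt_fin ht
      have h1 := hdom t htfin
      have h2 := hgreal t htfin
      -- u < a*t with a<0 gives t < u/a; I t ≥ -t > -u/a; but toReal < -u/a
      have ht2 : t < u / a := by
        rw [lt_div_iff_of_neg haneg]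
        linarith [h1]
      have hEq : -u / a = -(u / a) := by ring
      linarith [htlt, h2, ht2]
    · -- a = 0
      obtain ⟨t₁, ht₁'⟩ := hi 1 one_pos
      obtain ⟨ht₁fin, -⟩ := ereal_lt_fin ht₁'
      have := hdom t₁ ht₁fin
      rw [ha0] at this
      simp at this
      linarith
    · -- a > 0
      obtain ⟨t, htfin, htlt⟩ := hiireal (u / a) (div_pos hu0 hapos)
      have h1 := hdom t htfin
      have h2 : 0 ≤ (I t).toReal := ENNReal.toReal_nonneg
      have ht2 : u / a < t := by
        rw [div_lt_iff₀ hapos]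
        linarith [h1, mul_comm a t]
      linarith
  · -- main case b > 0
    set α := a / b with hα
    have key : ∀ t : ℝ, (c : EReal) ≤ (I t : EReal) + ((α * t : ℝ) : EReal) := by
      intro t
      by_cases ht : I t = ⊤
      · rw [ht, EReal.coe_ennreal_top, EReal.top_add_coe]
        exact le_top
      · have h1 := hfS _ (hmem t ht)
        rw [hf] at h1
        simp only at h1
        have hreal : c ≤ (I t).toReal + α * t := by
          have h2 : b * c < a * t + b * (I t).toReal := lt_trans hbc h1
          have h3 : c ≤ (a * t + b * (I t).toReal) / b := by
            rw [le_div_iff₀ hbpos]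
            linarith
          have h4 : (a * t + b * (I t).toReal) / b = (I t).toReal + α * t := by
            rw [hα]
            field_simp
            ring
          linarith
        rw [ereal_coe_ennreal_fin ht, ← EReal.coe_add]
        exact_mod_cast hreal
    refine ⟨α, ⟨?_, ?_⟩, key⟩
    · -- 0 ≤ α
      by_contra h
      push_neg at h
      have h1α : 0 < 1 - α := by linarith
      set δ := c / (2 * (1 - α)) with hδ
      have hδpos : 0 < δ := by positivity
      obtain ⟨t, ht⟩ := hi δ hδpos
      obtain ⟨htfin, htlt⟩ := ereal_lt_fin ht
      have h2 := hgreal t htfin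
      have h3reals : c ≤ (I t).toReal + α * t := by
        have := key t
        rw [ereal_coe_ennreal_fin htfin, ← EReal.coe_add] at this
        exact_mod_cast this
      have h4 : α * (t + δ) ≤ 0 :=
        mul_nonpos_of_nonpos_of_nonneg h.le (by linarith)
      have h5 : δ * (1 - α) = c / 2 := by
        rw [hδ]
        field_simp
      nlinarith
    · -- α ≤ 1
      by_contra h
      push_neg at h
      set δ := c / (2 * α) with hδ
      have hδpos : 0 < δ := by positivity
      obtain ⟨t, htfin, htlt⟩ := hiireal δ hδpos
      have h2 : 0 ≤ (I t).toReal := ENNReal.toReal_nonneg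
      have h3reals : c ≤ (I t).toReal + α * t := by
        have := key t
        rw [ereal_coe_ennreal_fin htfin, ← EReal.coe_add] at this
        exact_mod_cast this
      have h4 : (α - 1) * t < (α - 1) * δ := by
        apply mul_lt_mul_of_pos_left _ (by linarith)
        linarith
      have h5 : δ * α = c / 2 := by
        rw [hδ]
        field_simp
      nlinarith

section auxMeasure

variable {Ω : Type*} [MeasurableSpace Ω] (μ ν : Measure Ω)
  [IsProbabilityMeasure μ] [IsProbabilityMeasure ν]

lemma one_sub_tvDist (hμν : μ ≪ ν) (hνμ : ν ≪ μ) :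
    (1 : ℝ≥0∞) - tvDist μ ν = ∫⁻ x, min 1 (μ.rnDeriv ν x)⁻¹ ∂μ := by
  set D := μ.rnDeriv ν with hD
  have hDmeas : Measurable D := Measure.measurable_rnDeriv μ ν
  set T : ℝ≥0∞ := ∫⁻ x, (D x - 1) ∂ν with hT
  have hμs : ∀ Γ : Set Ω, MeasurableSet Γ → μ Γ = ∫⁻ x in Γ, D x ∂ν :=
    fun Γ hΓ => (Measure.setLIntegral_rnDeriv' hμν hΓ).symm
  set Γ₀ : Set Ω := {x | 1 < D x} with hΓ₀def
  have hΓ₀ : MeasurableSet Γ₀ := measurableSet_lt measurable_const hDmeas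
  have hTsplit : T = ∫⁻ x in Γ₀, (D x - 1) ∂ν := by
    rw [hT, ← lintegral_add_compl (fun x => D x - 1) hΓ₀]
    have hz : ∫⁻ x in Γ₀ᶜ, (D x - 1) ∂ν = 0 := by
      rw [setLIntegral_eq_zero_iff hΓ₀.compl (hDmeas.sub_const 1)]
      refine Filter.Eventually.of_forall fun x hx => ?_
      simp only [hΓ₀def, Set.mem_compl_iff, Set.mem_setOf_eq, not_lt] at hx
      exact tsub_eq_zero_of_le hx
    rw [hz, add_zero]
  have htv : tvDist μ ν = T := by
    apply le_antisymm
    · refine iSup₂_le fun Γ hΓ => ?_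
      rw [hμs Γ hΓ, tsub_le_iff_right]
      calc ∫⁻ x in Γ, D x ∂ν ≤ ∫⁻ x in Γ, ((D x - 1) + 1) ∂ν :=
            lintegral_mono fun x => le_tsub_add
        _ = (∫⁻ x in Γ, (D x - 1) ∂ν) + ν Γ := by
            rw [lintegral_add_right _ measurable_const, setLIntegral_one]
        _ ≤ T + ν Γ := by
            gcongr
            exact setLIntegral_le_lintegral _ _
    · have h1 : ∫⁻ x in Γ₀, (D x - 1) ∂ν = μ Γ₀ - ν Γ₀ := by
        have hfin : ∫⁻ _ in Γ₀, (1:ℝ≥0∞) ∂ν ≠ ∞ := by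
          rw [setLIntegral_one]; exact measure_ne_top ν Γ₀
        have hle : (fun _ => (1:ℝ≥0∞)) ≤ᵐ[ν.restrict Γ₀] fun x => D x := by
          filter_upwards [ae_restrict_mem hΓ₀] with x hx using le_of_lt hx
        rw [lintegral_sub measurable_const hfin hle, setLIntegral_one, ← hμs Γ₀ hΓ₀]
      rw [hTsplit, h1]
      exact le_iSup₂ (f := fun Γ _ => μ Γ - ν Γ) Γ₀ hΓ₀
  have hmin : (∫⁻ x, min (D x) 1 ∂ν) + T = 1 := by
    rw [hT, ← lintegral_add_right _ (hDmeas.sub_const 1)]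
    have hpt : ∀ x, min (D x) 1 + (D x - 1) = D x := fun x => by
      rcases le_total (D x) 1 with h | h
      · simp [min_eq_left h, tsub_eq_zero_of_le h]
      · rw [min_eq_right h, add_comm, tsub_add_cancel_of_le h]
    simp_rw [hpt]
    rw [Measure.lintegral_rnDeriv hμν]
    simp
  have hTne : T ≠ ∞ := by
    intro h
    rw [h] at hmin
    simp at hmin
  have h1T : (1:ℝ≥0∞) - T = ∫⁻ x, min (D x) 1 ∂ν :=
    (ENNReal.eq_sub_of_add_eq hTne hmin).symm
  have hwd : ν.withDensity D = μ := Measure.withDensity_rnDeriv_eq μ ν hμν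
  have hμside : ∫⁻ x, min 1 (D x)⁻¹ ∂μ = ∫⁻ x, D x * min 1 (D x)⁻¹ ∂ν := by
    rw [← hwd, lintegral_withDensity_eq_lintegral_mul _ hDmeas
      (show Measurable fun x => min 1 (D x)⁻¹ from measurable_const.min hDmeas.inv)]
    rfl
  have hae : ∀ᵐ x ∂ν, D x * min 1 (D x)⁻¹ = min (D x) 1 := by
    filter_upwards [(Measure.rnDeriv_pos hμν).filter_mono hνμ.ae_le,
      Measure.rnDeriv_lt_top μ ν] with x hpos hlt
    rcases le_total (D x) 1 with h | h
    · have : (1:ℝ≥0∞) ≤ (D x)⁻¹ := by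
        rw [ENNReal.one_le_inv]
        exact h
      rw [min_eq_left this, mul_one, min_eq_left h]
    · have : (D x)⁻¹ ≤ 1 := by
        rw [ENNReal.inv_le_one]
        exact h
      rw [min_eq_right this, ENNReal.mul_inv_cancel hpos.ne' hlt.ne, min_eq_right h]
  rw [htv, h1T, hμside, lintegral_congr_ae hae]

lemma rnDeriv_pos_lt_top (hμν : μ ≪ ν) (hνμ : ν ≪ μ) :
    ∀ᵐ x ∂μ, 0 < μ.rnDeriv ν x ∧ μ.rnDeriv ν x < ∞ := by
  filter_upwards [Measure.rnDeriv_pos hμν,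
    (Measure.rnDeriv_lt_top μ ν).filter_mono hμν.ae_le] with x h1 h2
  exact ⟨h1, h2⟩


lemma exp_neg_entropy_ae (hμν : μ ≪ ν) (hνμ : ν ≪ μ) :
    ∀ᵐ x ∂μ, ENNReal.ofReal (Real.exp (-entropyProduction μ ν x))
      = (μ.rnDeriv ν x)⁻¹ := by
  filter_upwards [rnDeriv_pos_lt_top μ ν hμν hνμ] with x hx
  obtain ⟨hpos, hlt⟩ := hx
  have hv : 0 < (μ.rnDeriv ν x).toReal := ENNReal.toReal_pos hpos.ne' hlt.ne
  rw [entropyProduction, Real.exp_neg, Real.exp_log hv, ← ENNReal.toReal_inv,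
    ENNReal.ofReal_toReal (ENNReal.inv_ne_top.2 hpos.ne')]


lemma min_exp_ae (hμν : μ ≪ ν) (hνμ : ν ≪ μ) :
    ∀ᵐ x ∂μ, min 1 (μ.rnDeriv ν x)⁻¹
      = ENNReal.ofReal (min 1 (Real.exp (-entropyProduction μ ν x))) := by
  filter_upwards [exp_neg_entropy_ae μ ν hμν hνμ] with x hx
  rw [← hx]
  rcases le_total (1:ℝ) (Real.exp (-entropyProduction μ ν x)) with h | h
  · rw [min_eq_left h, ENNReal.ofReal_one, min_eq_left]
    rw [← ENNReal.ofReal_one]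
    exact ENNReal.ofReal_le_ofReal h
  · rw [min_eq_right h, min_eq_right]
    rw [← ENNReal.ofReal_one]
    exact ENNReal.ofReal_le_ofReal h


lemma lintegral_exp_neg_entropyProduction (hμν : μ ≪ ν) (hνμ : ν ≪ μ) :
    ∫⁻ x, ENNReal.ofReal (Real.exp (-(1:ℝ) * entropyProduction μ ν x)) ∂μ = 1 := by
  have h1 : ∫⁻ x, ENNReal.ofReal (Real.exp (-(1:ℝ) * entropyProduction μ ν x)) ∂μ
      = ∫⁻ x, (μ.rnDeriv ν x)⁻¹ ∂μ := by
    refine lintegral_congr_ae ?_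
    filter_upwards [exp_neg_entropy_ae μ ν hμν hνμ] with x hx
    rw [neg_one_mul, hx]
  rw [h1]
  set D := μ.rnDeriv ν with hD
  have hwd : ν.withDensity D = μ := Measure.withDensity_rnDeriv_eq μ ν hμν
  have hDmeas : Measurable D := Measure.measurable_rnDeriv μ ν
  rw [← hwd, lintegral_withDensity_eq_lintegral_mul _ hDmeas
    (show Measurable fun x => (D x)⁻¹ from hDmeas.inv)]
  have : ∀ᵐ x ∂ν, (D * fun x => (D x)⁻¹) x = 1 := by
    filter_upwards [(Measure.rnDeriv_pos hμν).filter_mono hνμ.ae_le,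
      Measure.rnDeriv_lt_top μ ν] with x hpos hlt
    simp only [Pi.mul_apply]
    exact ENNReal.mul_inv_cancel hpos.ne' hlt.ne
  rw [lintegral_congr_ae this, lintegral_one, measure_univ]

end auxMeasure

/-- **Chernoff exponents via the entropic pressure.**
Assume `I : ℝ → [0,+∞]` is convex and lower semicontinuous, the large-deviation lower
bound holds for the laws of `r_λ⁻¹σ_λ` under `P_λ`, and the entropic pressure
`e(α) = sup_s (αs − I(−s))` equals `lim r_λ⁻¹ log ∫ e^{−ασ_λ} dP_λ` for `α ∈ [0,1]`.
Then the Chernoff exponents coincide: `lim r_λ⁻¹ log (1 − ‖P_λ−P̂_λ‖_var)` exists and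
equals `−I(0) = inf_{α∈[0,1]} e(α)`. -/
theorem chernoff_exponents_coincide
    {ι : Type*} (l : Filter ι) [l.NeBot]
    (r : ι → ℝ) (hrpos : ∀ i, 0 < r i) (hr : Tendsto r l atTop)
    (Ω : ι → Type*) [∀ i, MeasurableSpace (Ω i)]
    (P Phat : ∀ i, Measure (Ω i))
    (hPprob : ∀ i, IsProbabilityMeasure (P i))
    (hPhatprob : ∀ i, IsProbabilityMeasure (Phat i))
    (hac : ∀ i, P i ≪ Phat i) (hac' : ∀ i, Phat i ≪ P i)
    (I : ℝ → ℝ≥0∞)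
    (hIconv : ∀ x y p q : ℝ, 0 ≤ p → 0 ≤ q → p + q = 1 →
      I (p * x + q * y) ≤ ENNReal.ofReal p * I x + ENNReal.ofReal q * I y)
    (hIlsc : LowerSemicontinuous I)
    (hLDPlower : ∀ U : Set ℝ, IsOpen U →
      -(⨅ s ∈ U, (I s : EReal))
        ≤ liminf (fun i => ((r i)⁻¹ : EReal) *
            ENNReal.log (P i {x | (r i)⁻¹ * entropyProduction (P i) (Phat i) x ∈ U})) l)
    (e : ℝ → EReal)
    (he : ∀ α : ℝ, e α = ⨆ s : ℝ, ((α * s : ℝ) : EReal) - (I (-s) : EReal))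
    (helim : ∀ α ∈ Set.Icc (0 : ℝ) 1,
      Tendsto (fun i => ((r i)⁻¹ : EReal) *
          ENNReal.log (∫⁻ x, ENNReal.ofReal
            (Real.exp (-α * entropyProduction (P i) (Phat i) x)) ∂(P i))) l (nhds (e α))) :
    Tendsto (fun i => ((r i)⁻¹ : EReal) * ENNReal.log (1 - tvDist (P i) (Phat i))) l
        (nhds (-(I 0 : EReal)))
    ∧ -(I 0 : EReal) = ⨅ α ∈ Set.Icc (0 : ℝ) 1, e α := by
  haveI : ∀ i, IsProbabilityMeasure (P i) := hPprob
  haveI : ∀ i, IsProbabilityMeasure (Phat i) := hPhatprob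
  have hrne : ∀ i, (r i) ≠ 0 := fun i => (hrpos i).ne'
  have hrinv_nonneg : ∀ i, (0:EReal) ≤ (((r i)⁻¹ : ℝ) : EReal) := fun i => by
    exact_mod_cast inv_nonneg.2 (hrpos i).le
  have hσmeas : ∀ i, Measurable (entropyProduction (P i) (Phat i)) := fun i =>
    Real.measurable_log.comp (Measure.measurable_rnDeriv (P i) (Phat i)).ennreal_toReal
  have hM : ∀ i, (1:ℝ≥0∞) - tvDist (P i) (Phat i)
      = ∫⁻ x, ENNReal.ofReal
          (min 1 (Real.exp (-entropyProduction (P i) (Phat i) x))) ∂(P i) := fun i => by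
    rw [one_sub_tvDist (P i) (Phat i) (hac i) (hac' i)]
    exact lintegral_congr_ae (min_exp_ae (P i) (Phat i) (hac i) (hac' i))
  -- e 0 = 0 and e 1 = 0
  have he0 : e 0 = 0 := by
    have h := helim 0 ⟨le_refl 0, zero_le_one⟩
    have heq : (fun i => ((r i)⁻¹ : EReal) *
        ENNReal.log (∫⁻ x, ENNReal.ofReal
          (Real.exp (-(0:ℝ) * entropyProduction (P i) (Phat i) x)) ∂(P i)))
        = fun _ => (0:EReal) := by
      funext i
      simp [neg_zero, zero_mul, Real.exp_zero, ENNReal.ofReal_one, lintegral_one,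
        measure_univ, ENNReal.log_one, mul_zero]
    rw [heq] at h
    exact tendsto_nhds_unique h tendsto_const_nhds
  have he1 : e 1 = 0 := by
    have h := helim 1 ⟨zero_le_one, le_refl 1⟩
    have heq : (fun i => ((r i)⁻¹ : EReal) *
        ENNReal.log (∫⁻ x, ENNReal.ofReal
          (Real.exp (-(1:ℝ) * entropyProduction (P i) (Phat i) x)) ∂(P i)))
        = fun _ => (0:EReal) := by
      funext i
      rw [lintegral_exp_neg_entropyProduction (P i) (Phat i) (hac i) (hac' i)]
      simp
    rw [heq] at h
    exact tendsto_nhds_unique h tendsto_const_nhds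
  -- structural facts about I
  have hi : ∀ δ : ℝ, 0 < δ → ∃ t : ℝ, (I t : EReal) < (δ : EReal) := by
    intro δ hδ
    have h0 : ((-δ : ℝ) : EReal) < e 0 := by
      rw [he0]
      exact_mod_cast neg_lt_zero.2 hδ
    rw [he 0] at h0
    obtain ⟨s, hs⟩ := lt_iSup_iff.1 h0
    refine ⟨-s, ?_⟩
    rw [zero_mul, EReal.coe_zero, zero_sub, EReal.coe_neg] at hs
    exact EReal.neg_lt_neg_iff.1 hs
  have hg : ∀ t : ℝ, 0 ≤ (I t : EReal) + (t : EReal) := by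
    intro t
    have h1 : ((1 * (-t) : ℝ) : EReal) - (I (-(-t)) : EReal)
        ≤ ⨆ s : ℝ, ((1 * s : ℝ) : EReal) - (I (-s) : EReal) :=
      le_iSup (fun s => ((1 * s : ℝ) : EReal) - (I (-s) : EReal)) (-t)
    rw [← he 1, he1] at h1
    rw [one_mul, neg_neg] at h1
    by_cases ht : I t = ⊤
    · rw [ht, EReal.coe_ennreal_top, EReal.top_add_coe]
      exact le_top
    · rw [ereal_coe_ennreal_fin ht] at h1 ⊢
      rw [← EReal.coe_add]
      rw [← EReal.coe_sub] at h1
      have h2 : -t - (I t).toReal ≤ 0 := by exact_mod_cast h1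
      exact_mod_cast (by linarith : (0:ℝ) ≤ (I t).toReal + t)
  have hii : ∀ δ : ℝ, 0 < δ → ∃ t : ℝ, (I t : EReal) + (t : EReal) < (δ : EReal) := by
    intro δ hδ
    have h0 : ((-δ : ℝ) : EReal) < e 1 := by
      rw [he1]
      exact_mod_cast neg_lt_zero.2 hδ
    rw [he 1] at h0
    obtain ⟨s, hs⟩ := lt_iSup_iff.1 h0
    rw [one_mul] at hs
    refine ⟨-s, ?_⟩
    by_cases ht : I (-s) = ⊤
    · rw [ht, EReal.coe_ennreal_top, EReal.sub_top] at hs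
      exact absurd hs (by simp)
    · rw [ereal_coe_ennreal_fin ht] at hs ⊢
      rw [← EReal.coe_sub] at hs
      have h2 : -δ < s - (I (-s)).toReal := by exact_mod_cast hs
      rw [← EReal.coe_add]
      exact_mod_cast (by linarith : (I (-s)).toReal + -s < δ)
  -- conjunct 2
  have hinf : -(I 0 : EReal) = ⨅ α ∈ Set.Icc (0:ℝ) 1, e α := by
    have hinf_le0 : (⨅ α ∈ Set.Icc (0:ℝ) 1, e α) ≤ 0 := by
      refine le_trans (iInf₂_le 0 ⟨le_refl 0, zero_le_one⟩) ?_
      rw [he0]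
    apply le_antisymm
    · refine le_iInf₂ fun α hα => ?_
      have h1 : ((α * 0 : ℝ) : EReal) - (I (-0) : EReal) ≤ e α := by
        rw [he α]
        exact le_iSup (fun s => ((α * s : ℝ) : EReal) - (I (-s) : EReal)) 0
      rw [mul_zero, neg_zero, EReal.coe_zero, zero_sub] at h1
      exact h1
    · have hkey : ∀ c : ℝ, 0 < c → (c : EReal) < (I 0 : EReal) →
          (⨅ α ∈ Set.Icc (0:ℝ) 1, e α) ≤ ((-c : ℝ) : EReal) := by
        intro c hc0 hc
        obtain ⟨α, hαmem, hα⟩ := chernoff_sep I hIconv hIlsc hg hi hii c hc0 hc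
        refine le_trans (iInf₂_le α hαmem) ?_
        rw [he α]
        refine iSup_le fun s => ?_
        have h2 := hα (-s)
        by_cases ht : I (-s) = ⊤
        · rw [ht, EReal.coe_ennreal_top, EReal.sub_top]
          exact bot_le
        · rw [ereal_coe_ennreal_fin ht] at h2 ⊢
          rw [← EReal.coe_add] at h2
          rw [← EReal.coe_sub]
          have h2' : c ≤ (I (-s)).toReal + α * (-s) := by exact_mod_cast h2
          exact_mod_cast (by linarith : α * s - (I (-s)).toReal ≤ -c)
      by_cases hI00 : I 0 = 0
      · rw [hI00]
        simpa using hinf_le0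
      by_cases hI0top : I 0 = ⊤
      · rw [hI0top, EReal.coe_ennreal_top]
        by_contra hxbot
        push_neg at hxbot
        rw [EReal.neg_top] at hxbot
        obtain ⟨y, hy1, hy2⟩ := EReal.exists_between_coe_real hxbot
        set c := max 1 (-y) with hcdef
        have hc0 : (0:ℝ) < c := lt_of_lt_of_le one_pos (le_max_left _ _)
        have hcI : (c : EReal) < (I 0 : EReal) := by
          rw [hI0top, EReal.coe_ennreal_top]
          exact EReal.coe_lt_top c
        have hx2 := hkey c hc0 hcI
        have h5 : ((-c : ℝ) : EReal) ≤ (y : EReal) := by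
          have h6 : -c ≤ y := by
            have := le_max_right 1 (-y)
            linarith [this]
          exact_mod_cast h6
        exact absurd (lt_of_le_of_lt (le_trans hx2 h5) hy2) (lt_irrefl _)
      · have hw : (0:ℝ) < (I 0).toReal := ENNReal.toReal_pos hI00 hI0top
        have hw2 : -(I 0 : EReal) = ((-(I 0).toReal : ℝ) : EReal) := by
          rw [ereal_coe_ennreal_fin hI0top, ← EReal.coe_neg]
        rw [hw2]
        by_contra hlt
        push_neg at hlt
        obtain ⟨y, hy1, hy2⟩ := EReal.exists_between_coe_real hlt
        have hyneg : y < 0 := by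
          have := lt_of_lt_of_le hy2 hinf_le0
          exact_mod_cast this
        have hy1' : -(I 0).toReal < y := by exact_mod_cast hy1
        have hcI : ((-y : ℝ) : EReal) < (I 0 : EReal) := by
          rw [ereal_coe_ennreal_fin hI0top]
          exact_mod_cast (by linarith : -y < (I 0).toReal)
        have hx2 := hkey (-y) (by linarith) hcI
        rw [neg_neg] at hx2
        exact absurd (lt_of_le_of_lt hx2 hy2) (lt_irrefl _)
  -- conjunct 1
  refine ⟨?_, hinf⟩
  -- limsup bound
  have hup : limsup (fun i => ((r i)⁻¹ : EReal) *
      ENNReal.log (1 - tvDist (P i) (Phat i))) l ≤ -(I 0 : EReal) := by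
    rw [hinf]
    refine le_iInf₂ fun α hα => ?_
    have hpt : ∀ i, ((r i)⁻¹ : EReal) * ENNReal.log (1 - tvDist (P i) (Phat i))
        ≤ ((r i)⁻¹ : EReal) * ENNReal.log (∫⁻ x, ENNReal.ofReal
            (Real.exp (-α * entropyProduction (P i) (Phat i) x)) ∂(P i)) := by
      intro i
      apply mul_le_mul_of_nonneg_left _ (hrinv_nonneg i)
      apply ENNReal.log_monotone
      rw [hM i]
      refine lintegral_mono fun x => ENNReal.ofReal_le_ofReal ?_
      set z := entropyProduction (P i) (Phat i) x with hz
      rcases le_total 0 z with hz0 | hz0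
      · refine le_trans (min_le_right _ _) (Real.exp_le_exp.2 ?_)
        nlinarith [hα.1, hα.2]
      · refine le_trans (min_le_left _ _) ?_
        rw [show (1:ℝ) = Real.exp 0 from Real.exp_zero.symm]
        exact Real.exp_le_exp.2 (by nlinarith [hα.1, hα.2])
    calc limsup (fun i => ((r i)⁻¹ : EReal) *
          ENNReal.log (1 - tvDist (P i) (Phat i))) l
        ≤ limsup (fun i => ((r i)⁻¹ : EReal) * ENNReal.log (∫⁻ x, ENNReal.ofReal
            (Real.exp (-α * entropyProduction (P i) (Phat i) x)) ∂(P i))) l :=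
          limsup_le_limsup (Eventually.of_forall hpt)
      _ = e α := (helim α hα).limsup_eq
  -- liminf bound
  have hlow : -(I 0 : EReal) ≤ liminf (fun i => ((r i)⁻¹ : EReal) *
      ENNReal.log (1 - tvDist (P i) (Phat i))) l := by
    have hstep : ∀ ε : ℝ, 0 < ε → ((-ε : ℝ) : EReal) + -(I 0 : EReal)
        ≤ liminf (fun i => ((r i)⁻¹ : EReal) *
            ENNReal.log (1 - tvDist (P i) (Phat i))) l := by
      intro ε hε
      have hU := hLDPlower (Set.Iio ε) isOpen_Iio
      have hptG : ∀ i, ((-ε : ℝ) : EReal) + ((r i)⁻¹ : EReal) *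
          ENNReal.log (P i {x | (r i)⁻¹ * entropyProduction (P i) (Phat i) x ∈ Set.Iio ε})
          ≤ ((r i)⁻¹ : EReal) * ENNReal.log (1 - tvDist (P i) (Phat i)) := by
        intro i
        set A := {x | (r i)⁻¹ * entropyProduction (P i) (Phat i) x ∈ Set.Iio ε} with hA
        have hMineq : ENNReal.ofReal (Real.exp (-(r i * ε))) * (P i) A
            ≤ (1:ℝ≥0∞) - tvDist (P i) (Phat i) := by
          rw [hM i]
          calc ENNReal.ofReal (Real.exp (-(r i * ε))) * (P i) A
              = ∫⁻ _ in A, ENNReal.ofReal (Real.exp (-(r i * ε))) ∂(P i) :=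
                (setLIntegral_const _ _).symm
            _ ≤ ∫⁻ x in A, ENNReal.ofReal
                  (min 1 (Real.exp (-entropyProduction (P i) (Phat i) x))) ∂(P i) := by
                refine setLIntegral_mono
                  ((measurable_const.min
                    (Real.measurable_exp.comp (hσmeas i).neg)).ennreal_ofReal) ?_
                intro x hx
                have hx0 : (r i)⁻¹ * entropyProduction (P i) (Phat i) x < ε := hx
                have hx' : entropyProduction (P i) (Phat i) x < r i * ε := by
                  have h7 := mul_lt_mul_of_pos_left hx0 (hrpos i)
                  rwa [← mul_assoc, mul_inv_cancel₀ (hrne i), one_mul] at h7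
                apply ENNReal.ofReal_le_ofReal
                apply le_min
                · rw [show (1:ℝ) = Real.exp 0 from Real.exp_zero.symm]
                  exact Real.exp_le_exp.2 (by nlinarith [hrpos i])
                · exact Real.exp_le_exp.2 (by linarith)
            _ ≤ ∫⁻ x, ENNReal.ofReal
                  (min 1 (Real.exp (-entropyProduction (P i) (Phat i) x))) ∂(P i) :=
                setLIntegral_le_lintegral _ _
        have hlog := ENNReal.log_monotone hMineq
        rw [ENNReal.log_mul_add, ENNReal.log_ofReal_of_pos (Real.exp_pos _),
          Real.log_exp] at hlog
        have hmul := mul_le_mul_of_nonneg_left hlog (hrinv_nonneg i)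
        have hzne : ENNReal.log ((P i) A) ≠ ⊤ := by
          rw [ne_eq, ENNReal.log_eq_top_iff]
          exact measure_ne_top _ _
        rw [ereal_mul_add_distrib (inv_pos.2 (hrpos i)) _ hzne] at hmul
        have hcoef : ((r i)⁻¹ * -(r i * ε) : ℝ) = -ε := by
          rw [mul_neg, ← mul_assoc, inv_mul_cancel₀ (hrne i), one_mul]
        rw [hcoef] at hmul
        exact hmul
      calc ((-ε : ℝ) : EReal) + -(I 0 : EReal)
          ≤ ((-ε : ℝ) : EReal) + liminf (fun i => ((r i)⁻¹ : EReal) *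
              ENNReal.log (P i {x | (r i)⁻¹ *
                entropyProduction (P i) (Phat i) x ∈ Set.Iio ε})) l := by
            apply add_le_add_right
            refine le_trans ?_ hU
            rw [EReal.neg_le_neg_iff]
            exact iInf₂_le 0 (show (0:ℝ) ∈ Set.Iio ε from hε)
        _ ≤ liminf (fun i => ((-ε : ℝ) : EReal) + ((r i)⁻¹ : EReal) *
              ENNReal.log (P i {x | (r i)⁻¹ *
                entropyProduction (P i) (Phat i) x ∈ Set.Iio ε})) l := by
            have h8 := EReal.le_liminf_add (f := l) (u := fun _ => ((-ε : ℝ) : EReal))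
              (v := fun i => ((r i)⁻¹ : EReal) *
                ENNReal.log (P i {x | (r i)⁻¹ *
                  entropyProduction (P i) (Phat i) x ∈ Set.Iio ε}))
            rwa [liminf_const] at h8
        _ ≤ liminf (fun i => ((r i)⁻¹ : EReal) *
              ENNReal.log (1 - tvDist (P i) (Phat i))) l :=
            liminf_le_liminf (Eventually.of_forall hptG)
    by_cases hI0top : I 0 = ⊤
    · rw [hI0top, EReal.coe_ennreal_top, EReal.neg_top]
      exact bot_le
    · have hw2 : -(I 0 : EReal) = ((-(I 0).toReal : ℝ) : EReal) := by
        rw [ereal_coe_ennreal_fin hI0top, ← EReal.coe_neg]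
      rw [hw2]
      by_contra hlt
      push_neg at hlt
      obtain ⟨y, hy1, hy2⟩ := EReal.exists_between_coe_real hlt
      have hy2' : y < -(I 0).toReal := by exact_mod_cast hy2
      have hεpos : 0 < -(I 0).toReal - y := by linarith
      have h9 := hstep (-(I 0).toReal - y) hεpos
      rw [hw2] at h9
      rw [← EReal.coe_add] at h9
      have h10 : (-(-(I 0).toReal - y) + -(I 0).toReal : ℝ) = y := by ring
      rw [h10] at h9
      exact absurd (lt_of_le_of_lt h9 hy1) (lt_irrefl _)
  exact tendsto_of_le_liminf_of_limsup_le hlow hup
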